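/- arXiv:1811.02206 — 8 statements merged into one kernel-verified Lean document; each statement's English description precedes it below -/
import Mathlib

section
/- Let X be a nonempty compact metrizable totally disconnected space and let T : X → X be a homeomorphism with no periodic points, i.e. Tⁿ(x) ≠ x for every x ∈ X and every integer n ≥ 1. Then for every integer n ≥ 1 there exists a clopen set F ⊆ X such that the sets F, T⁻¹(F), …, T⁻⁽ⁿ⁻¹⁾(F) are pairwise disjoint and F ∪ T⁻¹(F) ∪ … ∪ T⁻⁽²ⁿ⁻²⁾(F) = X. -/
open Function Set

section KM
variable {X : Type*}

/-- auxiliary: points whose forward or backward orbit within `n` steps hits `A`. -/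
def kmR (f g : X → X) (n : ℕ) (A : Set X) : Set X :=
  (⋃ i ∈ Finset.range n, f^[i] ⁻¹' A) ∪ ⋃ i ∈ Finset.range n, g^[i] ⁻¹' A

lemma mem_kmR {f g : X → X} {n : ℕ} {A : Set X} {x : X} :
    x ∈ kmR f g n A ↔ (∃ i < n, f^[i] x ∈ A) ∨ (∃ i < n, g^[i] x ∈ A) := by
  simp [kmR]

lemma kmR_mono (f g : X → X) (n : ℕ) {A B : Set X} (h : A ⊆ B) :
    kmR f g n A ⊆ kmR f g n B := by
  intro x hx
  rw [mem_kmR] at hx ⊢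
  rcases hx with ⟨i, hi, hm⟩ | ⟨i, hi, hm⟩
  · exact Or.inl ⟨i, hi, h hm⟩
  · exact Or.inr ⟨i, hi, h hm⟩

lemma subset_kmR (f g : X → X) {n : ℕ} (hn : 1 ≤ n) (A : Set X) : A ⊆ kmR f g n A := by
  intro x hx
  rw [mem_kmR]
  exact Or.inl ⟨0, hn, hx⟩

lemma kmR_clopen [TopologicalSpace X] {f g : X → X} (hf : Continuous f) (hg : Continuous g)
    (n : ℕ) {A : Set X} (hA : IsClopen A) : IsClopen (kmR f g n A) := by
  exact IsClopen.union
    (isClopen_biUnion_finset fun i _ => hA.preimage (hf.iterate i))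
    (isClopen_biUnion_finset fun i _ => hA.preimage (hg.iterate i))

/-- the greedy disjointification fold. -/
def kmB (f g : X → X) (n : ℕ) : List (Set X) → Set X
  | [] => ∅
  | U :: L => kmB f g n L ∪ (U \ kmR f g n (kmB f g n L))

lemma kmB_clopen [TopologicalSpace X] {f g : X → X} (hf : Continuous f) (hg : Continuous g)
    (n : ℕ) : ∀ L : List (Set X), (∀ U ∈ L, IsClopen U) → IsClopen (kmB f g n L)
  | [], _ => isClopen_empty
  | U :: L, h => by
    have hB := kmB_clopen hf hg n L (fun V hV => h V (List.mem_cons_of_mem _ hV))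
    exact hB.union ((h U (List.mem_cons_self)).diff (kmR_clopen hf hg n hB))

lemma kmB_disj {f g : X → X} (hgf : LeftInverse g f) {n : ℕ} :
    ∀ L : List (Set X), (∀ U ∈ L, ∀ k, 1 ≤ k → k < n → ∀ y ∈ U, f^[k] y ∉ U) →
      ∀ k, 1 ≤ k → k < n → ∀ y, y ∈ kmB f g n L → f^[k] y ∉ kmB f g n L
  | [], _ => fun k _ _ y hy => absurd hy (Set.notMem_empty y)
  | U :: L, h => fun k hk1 hkn y hy hy2 => by
    have ih := kmB_disj hgf L (fun V hV => h V (List.mem_cons_of_mem _ hV)) k hk1 hkn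
    rcases hy with hy | hy <;> rcases hy2 with hy2 | hy2
    · exact ih y hy hy2
    · -- y ∈ old, f^[k] y ∈ new : f^[k] y ∈ R(old) via g^[k]
      refine hy2.2 (mem_kmR.2 (Or.inr ⟨k, hkn, ?_⟩))
      rwa [hgf.iterate k y]
    · -- y ∈ new, f^[k] y ∈ old : y ∈ R(old)
      exact hy.2 (mem_kmR.2 (Or.inl ⟨k, hkn, hy2⟩))
    · exact h U (List.mem_cons_self) k hk1 hkn y hy.1 hy2.1

lemma kmB_cover (f g : X → X) {n : ℕ} (hn : 1 ≤ n) :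
    ∀ L : List (Set X), ∀ U ∈ L, U ⊆ kmR f g n (kmB f g n L)
  | U :: L, V, hV, x, hx => by
    rcases List.mem_cons.1 hV with rfl | hV
    · by_cases hx2 : x ∈ kmR f g n (kmB f g n L)
      · exact kmR_mono f g n (Set.subset_union_left) hx2
      · exact subset_kmR f g hn _ (Or.inr ⟨hx, hx2⟩)
    · exact kmR_mono f g n (Set.subset_union_left) (kmB_cover f g hn L V hV hx)

end KM

/-- Krieger's Marker Lemma (aperiodic, invertible case): in an aperiodic
zero-dimensional system `(X, T)`, for every `n ≥ 1` there is a clopen `n`-marker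
`F` whose preimages `F, T⁻¹F, …, T⁻⁽ⁿ⁻¹⁾F` are pairwise disjoint and with
`F ∪ T⁻¹F ∪ … ∪ T⁻⁽²ⁿ⁻²⁾F = X`. -/
theorem krieger_marker_lemma
    (X : Type*) [TopologicalSpace X] [CompactSpace X] [TopologicalSpace.MetrizableSpace X]
    [TotallyDisconnectedSpace X] [Nonempty X]
    (T : X ≃ₜ X)
    (h_aper : ∀ (x : X) (n : ℕ), 1 ≤ n → (T : X → X)^[n] x ≠ x)
    (n : ℕ) (hn : 1 ≤ n) :
    ∃ F : Set X, IsClopen F ∧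
      (∀ i j, i < n → j < n → i ≠ j →
        Disjoint ((T : X → X)^[i] ⁻¹' F) ((T : X → X)^[j] ⁻¹' F)) ∧
      (⋃ i < 2 * n - 1, (T : X → X)^[i] ⁻¹' F) = Set.univ := by
  letI : MetricSpace X := TopologicalSpace.metrizableSpaceMetric X
  haveI : T2Space X := inferInstance
  haveI : TotallySeparatedSpace X := inferInstance
  set f : X → X := (T : X → X) with hfdef
  set g : X → X := (T.symm : X → X) with hgdef
  have hfc : Continuous f := T.continuous
  have hgc : Continuous g := T.symm.continuous
  have hgf : LeftInverse g f := T.symm_apply_apply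
  have hfg : LeftInverse f g := T.apply_symm_apply
  -- pointwise clopen sets
  have key : ∀ x : X, ∃ U : Set X, IsClopen U ∧ x ∈ U ∧
      ∀ k, 1 ≤ k → k < n → ∀ y ∈ U, f^[k] y ∉ U := by
    intro x
    have sep : ∀ k : ℕ, ∃ V : Set X, IsClopen V ∧ x ∈ V ∧
        (1 ≤ k → ∀ y ∈ V, f^[k] y ∉ V) := by
      intro k
      rcases Nat.eq_zero_or_pos k with rfl | hk
      · exact ⟨univ, isClopen_univ, mem_univ x, fun h => absurd h (by omega)⟩
      · have hne : x ≠ f^[k] x := (h_aper x k hk).symm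
        obtain ⟨W, hW, hxW, hxW'⟩ := exists_isClopen_of_totally_separated hne
        refine ⟨W ∩ f^[k] ⁻¹' Wᶜ, hW.inter (hW.compl.preimage (hfc.iterate k)),
          ⟨hxW, hxW'⟩, fun _ y hy hy2 => hy.2 hy2.1⟩
    choose V hVclopen hxV hVgood using sep
    refine ⟨⋂ k ∈ Finset.range n, V k, isClopen_biInter_finset fun k _ => hVclopen k,
      mem_iInter₂.2 fun k _ => hxV k, fun k hk1 hkn y hy hy2 => ?_⟩
    exact hVgood k hk1 y (mem_iInter₂.1 hy k (Finset.mem_range.2 hkn))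
      (mem_iInter₂.1 hy2 k (Finset.mem_range.2 hkn))
  choose U hUclopen hxU hUgood using key
  obtain ⟨t, ht⟩ := IsCompact.elim_finite_subcover isCompact_univ U
    (fun x => (hUclopen x).isOpen) (fun x _ => mem_iUnion.2 ⟨x, hxU x⟩)
  set L : List (Set X) := t.toList.map U with hLdef
  have hLmem : ∀ V ∈ L, IsClopen V ∧ ∀ k, 1 ≤ k → k < n → ∀ y ∈ V, f^[k] y ∉ V := by
    intro V hV
    rcases List.mem_map.1 hV with ⟨a, _, rfl⟩
    exact ⟨hUclopen a, hUgood a⟩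
  set F : Set X := kmB f g n L with hFdef
  have hFclopen : IsClopen F := kmB_clopen hfc hgc n L fun V hV => (hLmem V hV).1
  have hFdisj : ∀ k, 1 ≤ k → k < n → ∀ y, y ∈ F → f^[k] y ∉ F :=
    kmB_disj hgf L fun V hV => (hLmem V hV).2
  have hFcover : ∀ x : X, (∃ i < n, f^[i] x ∈ F) ∨ (∃ i < n, g^[i] x ∈ F) := by
    intro x
    rcases mem_iUnion₂.1 (ht (mem_univ x)) with ⟨a, ha, hxa⟩
    exact mem_kmR.1 (kmB_cover f g hn L (U a)
      (List.mem_map.2 ⟨a, Finset.mem_toList.2 ha, rfl⟩) hxa)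
  -- final marker
  refine ⟨g^[n-1] ⁻¹' F, hFclopen.preimage (hgc.iterate _), ?_, ?_⟩
  · -- disjointness
    have main : ∀ i j, i < j → j < n → Disjoint (f^[i] ⁻¹' (g^[n-1] ⁻¹' F))
        (f^[j] ⁻¹' (g^[n-1] ⁻¹' F)) := by
      intro i j hij hjn
      rw [Set.disjoint_left]
      intro x hxi hxj
      simp only [mem_preimage] at hxi hxj
      set y := g^[n-1] (f^[i] x) with hy
      have hcomm : Function.Commute f g := fun z => by
        rw [hfg z, hgf z]
      have h1 : g^[n-1] (f^[j] x) = f^[j-i] y := by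
        have : f^[j] x = f^[j-i] (f^[i] x) := by
          rw [← Function.iterate_add_apply]
          congr 1
          omega
        rw [this, hy]
        exact ((hcomm.iterate_iterate (j-i) (n-1)).symm (f^[i] x))
      rw [h1] at hxj
      exact hFdisj (j-i) (by omega) (by omega) y hxi hxj
    intro i j hi hj hij
    rcases lt_or_gt_of_ne hij with h | h
    · exact main i j h hj
    · exact (main j i h hi).symm
  · -- covering
    rw [Set.eq_univ_iff_forall]
    intro x
    rw [mem_iUnion₂]
    rcases hFcover x with ⟨i, hi, hm⟩ | ⟨i, hi, hm⟩
    · refine ⟨i + (n-1), by omega, ?_⟩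
      simp only [mem_preimage]
      have : f^[i + (n-1)] x = f^[n-1] (f^[i] x) := by
        rw [← Function.iterate_add_apply]
        congr 1
        omega
      rw [this, (hgf.iterate (n-1)) (f^[i] x)]
      exact hm
    · refine ⟨n - 1 - i, by omega, ?_⟩
      simp only [mem_preimage]
      have h1 : g^[n-1] (f^[n-1-i] x) = g^[i] (g^[n-1-i] (f^[n-1-i] x)) := by
        rw [← Function.iterate_add_apply]
        congr 1
        omega
      rw [h1, (hgf.iterate (n-1-i)) x]
      exact hm
end

section
/- Let E and C be nonempty compact metrizable totally disconnected topological spaces. For each k ∈ ℕ let ψ_k : E × C → ℝ be a nonnegative upper semicontinuous function. Assume that for every e ∈ E the set {t ∈ C : ψ_k(e, t) = 0 for all k ∈ ℕ} is dense in C. Then there exists a continuous map s : E → C such that ψ_k(e, s(e)) = 0 for every e ∈ E and every k ∈ ℕ. -/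
open Set Metric

/-- Gluing finitely many constants along clopen sets, by induction on a list. -/
private lemma exists_locallyConstant_piecewise {X β : Type*} [TopologicalSpace X]
    {ι : Type*} (V : ι → Set X) (t : ι → β) (hV : ∀ i, IsClopen (V i)) (b : β) :
    ∀ L : List ι, ∃ h : X → β, IsLocallyConstant h ∧
      ∀ x, (∃ i ∈ L, x ∈ V i) → ∃ i ∈ L, x ∈ V i ∧ h x = t i := by
  intro L
  induction L with
  | nil => exact ⟨fun _ => b, IsLocallyConstant.const b, fun x hx => by simpa using hx⟩
  | cons i L ih =>
    obtain ⟨h, hlc, hprop⟩ := ih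
    classical
    refine ⟨(V i).piecewise (fun _ => t i) h, ?_, ?_⟩
    · rw [IsLocallyConstant.iff_exists_open]
      intro x
      by_cases hx : x ∈ V i
      · exact ⟨V i, (hV i).2, hx, fun y hy => by
          simp [Set.piecewise_eq_of_mem _ _ _ hy, Set.piecewise_eq_of_mem _ _ _ hx]⟩
      · rw [IsLocallyConstant.iff_exists_open] at hlc
        obtain ⟨O, hO, hxO, hOconst⟩ := hlc x
        refine ⟨O ∩ (V i)ᶜ, hO.inter (hV i).1.isOpen_compl, ⟨hxO, hx⟩, fun y hy => ?_⟩
        rw [Set.piecewise_eq_of_notMem _ _ _ hy.2, Set.piecewise_eq_of_notMem _ _ _ hx]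
        exact hOconst y hy.1
    · intro x hx
      by_cases hxi : x ∈ V i
      · exact ⟨i, List.mem_cons_self, hxi, Set.piecewise_eq_of_mem _ _ _ hxi⟩
      · obtain ⟨j, hjL, hxj⟩ := hx
        rcases List.mem_cons.mp hjL with rfl | hjL
        · exact absurd hxj hxi
        · obtain ⟨j', hj', hxj', hval⟩ := hprop x ⟨j, hjL, hxj⟩
          exact ⟨j', List.mem_cons_of_mem _ hj', hxj', by
            rw [Set.piecewise_eq_of_notMem _ _ _ hxi, hval]⟩

/-- Abstract continuous selector lemma: if `E` and `C` are nonempty compact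
zero-dimensional metrizable spaces, `ψ_k : E × C → ℝ` are nonnegative upper
semicontinuous functions and for every `e ∈ E` the set of parameters `t ∈ C`
annihilating all `ψ_k(e, ·)` is dense, then there is a continuous selector
`s : E → C` with `ψ_k(e, s(e)) = 0` for all `e` and `k`. -/
theorem continuous_selector_abstract
    (E C : Type*)
    [TopologicalSpace E] [CompactSpace E] [TopologicalSpace.MetrizableSpace E]
    [TotallyDisconnectedSpace E] [Nonempty E]
    [TopologicalSpace C] [CompactSpace C] [TopologicalSpace.MetrizableSpace C]
    [TotallyDisconnectedSpace C] [Nonempty C]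
    (ψ : ℕ → E × C → ℝ)
    (h_nonneg : ∀ k p, 0 ≤ ψ k p)
    (h_usc : ∀ k, UpperSemicontinuous (ψ k))
    (h_dense : ∀ e : E, Dense {t : C | ∀ k, ψ k (e, t) = 0}) :
    ∃ s : E → C, Continuous s ∧ ∀ (e : E) (k : ℕ), ψ k (e, s e) = 0 := by
  classical
  letI : MetricSpace E := TopologicalSpace.metrizableSpaceMetric E
  letI : MetricSpace C := TopologicalSpace.metrizableSpaceMetric C
  -- The open sets U n whose intersection forces all ψ k to vanish
  set U : ℕ → Set (E × C) := fun n => {p | ∀ k ≤ n, ψ k p < ((n : ℝ) + 1)⁻¹} with hUdef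
  have hUopen : ∀ n, IsOpen (U n) := by
    intro n
    have heq : U n = ⋂ k ∈ Finset.range (n + 1), (ψ k) ⁻¹' Set.Iio ((n : ℝ) + 1)⁻¹ := by
      ext p
      simp [hUdef, Nat.lt_succ_iff]
    rw [heq]
    exact isOpen_biInter_finset fun k _ => (h_usc k).isOpen_preimage _
  have hGU : ∀ n (p : E × C), (∀ k, ψ k p = 0) → p ∈ U n := by
    intro n p hp
    simp only [hUdef, Set.mem_setOf_eq]
    intro k _
    rw [hp k]
    positivity
  -- The sets of continuous maps whose graph lies in U n
  set S : ℕ → Set C(E, C) := fun n => {f | ∀ e, (e, f e) ∈ U n} with hSdef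
  have hSopen : ∀ n, IsOpen (S n) := by
    intro n
    rw [Metric.isOpen_iff]
    intro f hf
    rcases Set.eq_empty_or_nonempty (U n)ᶜ with hc | hc
    · refine ⟨1, one_pos, fun g _ => ?_⟩
      simp only [hSdef, Set.mem_setOf_eq]
      intro e
      have : U n = Set.univ := Set.compl_empty_iff.mp hc
      rw [this]
      exact Set.mem_univ _
    · set g : E → ℝ := fun e => Metric.infDist (e, f e) (U n)ᶜ with hg
      have hgc : Continuous g :=
        (Metric.continuous_infDist_pt _).comp (continuous_id.prodMk f.continuous)
      obtain ⟨e₀, -, he₀'⟩ := isCompact_univ.exists_isMinOn Set.univ_nonempty hgc.continuousOn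
      have he₀ : ∀ x, g e₀ ≤ g x := fun x => he₀' (Set.mem_univ x)
      have hδ : 0 < g e₀ := by
        rw [hg]
        simp only
        rw [← (hUopen n).isClosed_compl.notMem_iff_infDist_pos hc]
        simpa using hf e₀
      refine ⟨g e₀, hδ, fun h hd => ?_⟩
      simp only [hSdef, Set.mem_setOf_eq]
      intro e
      by_contra hmem
      have h1 : g e ≤ dist ((e, f e) : E × C) (e, h e) :=
        Metric.infDist_le_dist_of_mem (by simpa using hmem)
      have h2 : dist ((e, f e) : E × C) (e, h e) = dist (f e) (h e) := by
        rw [Prod.dist_eq, dist_self]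
        exact max_eq_right dist_nonneg
      have h3 : dist (f e) (h e) ≤ dist f h := ContinuousMap.dist_apply_le_dist e
      have h4 : dist f h < g e₀ := by rw [dist_comm]; exact Metric.mem_ball.mp hd
      have h5 := he₀ e
      linarith
  have hSdense : ∀ n, Dense (S n) := by
    intro n
    rw [Metric.dense_iff]
    intro f ε hε
    -- around each point, a clopen set and a value annihilating the ψ's
    have key : ∀ c : E, ∃ (V : Set E) (t : C), IsClopen V ∧ c ∈ V ∧
        (∀ e ∈ V, (e, t) ∈ U n) ∧ (∀ e ∈ V, dist t (f e) < ε / 2) := by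
      intro c
      obtain ⟨t, ht, htd⟩ := (h_dense c).exists_dist_lt (f c) (by positivity : (0:ℝ) < ε / 4)
      have hct : (c, t) ∈ U n := hGU n (c, t) ht
      obtain ⟨O, W, hO, hW, hcO, htW, hsub⟩ := isOpen_prod_iff.mp (hUopen n) c t hct
      have hO' : IsOpen (O ∩ {e | dist (f e) (f c) < ε / 4}) :=
        hO.inter (isOpen_lt (f.continuous.dist continuous_const) continuous_const)
      obtain ⟨V, hVclopen, hcV, hVsub⟩ :=
        compact_exists_isClopen_in_isOpen hO' ⟨hcO, by simp [hε]⟩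
      refine ⟨V, t, hVclopen, hcV, fun e he => hsub ⟨(hVsub he).1, htW⟩, fun e he => ?_⟩
      have h1 : dist (f e) (f c) < ε / 4 := (hVsub he).2
      have h2 := dist_triangle t (f c) (f e)
      have h3 := dist_comm t (f c)
      have h4 := dist_comm (f c) (f e)
      linarith
    choose V t hVclopen hmemV hVU hVdist using key
    obtain ⟨F, hF⟩ := isCompact_univ.elim_finite_subcover V (fun c => (hVclopen c).2)
      (fun e _ => Set.mem_iUnion.mpr ⟨e, hmemV e⟩)
    obtain ⟨h, hlc, hprop⟩ :=
      exists_locallyConstant_piecewise V t hVclopen (Classical.arbitrary C) F.toList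
    have hcov : ∀ x : E, ∃ i ∈ F.toList, x ∈ V i := by
      intro x
      have hx := hF (Set.mem_univ x)
      simp only [Set.mem_iUnion] at hx
      obtain ⟨i, hiF, hxi⟩ := hx
      exact ⟨i, Finset.mem_toList.mpr hiF, hxi⟩
    refine ⟨⟨h, hlc.continuous⟩, Set.mem_inter ?_ ?_⟩
    · rw [Metric.mem_ball, ContinuousMap.dist_lt_iff hε]
      intro x
      obtain ⟨i, hi, hxV, hval⟩ := hprop x (hcov x)
      show dist (h x) (f x) < ε
      rw [hval]
      have := hVdist i x hxV
      linarith
    · simp only [hSdef, Set.mem_setOf_eq]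
      intro e
      obtain ⟨i, hi, hxV, hval⟩ := hprop e (hcov e)
      show (e, h e) ∈ U n
      rw [hval]
      exact hVU i e hxV
  -- Baire category
  have hne : Nonempty C(E, C) := ⟨ContinuousMap.const E (Classical.arbitrary C)⟩
  obtain ⟨f, hf⟩ := (dense_iInter_of_isOpen hSopen hSdense).nonempty
  rw [Set.mem_iInter] at hf
  simp only [hSdef, Set.mem_setOf_eq] at hf
  refine ⟨f, f.continuous, fun e k => ?_⟩
  have hle : ψ k (e, f e) ≤ 0 := by
    by_contra hpos
    push_neg at hpos
    obtain ⟨n, hn⟩ := exists_nat_one_div_lt hpos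
    have hm : ψ k (e, f e) < ((max n k : ℕ) + 1 : ℝ)⁻¹ := hf (max n k) e k (le_max_right n k)
    have hcast : ((n : ℝ) + 1) ≤ ((max n k : ℕ) : ℝ) + 1 := by
      push_cast
      exact add_le_add_left (le_max_left _ _) 1
    have hinv : ((max n k : ℕ) + 1 : ℝ)⁻¹ ≤ ((n : ℝ) + 1)⁻¹ :=
      inv_anti₀ (by positivity) hcast
    rw [one_div] at hn
    linarith
  exact le_antisymm hle (h_nonneg k (e, f e))
end

section
/- Let X be a compact metric space. For each k ∈ ℕ let m_k be a natural number, let x^{(k)}_1, …, x^{(k)}_{m_k} ∈ X, and let r_k : ℝ → ℝ be continuous and strictly increasing. Let C ⊆ ℝ be a nonempty compact perfect totally disconnected set, and let E be a nonempty compact totally disconnected subset of the space P(X) of Borel probability measures on X with the topology of weak convergence. Then there exists a continuous map s : E → C such that for every μ ∈ E and every k ∈ ℕ one has μ(⋃_{i=1}^{m_k} S(x^{(k)}_i, r_k(s(μ)))) = 0, where S(x, ρ) = {y ∈ X : d(x, y) = ρ}. -/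
open MeasureTheory Metric Filter Set
open scoped NNReal ENNReal Topology

-- usc of sphere measures, jointly in (measure, parameter)
lemma sphere_usc_open {X : Type*} [MetricSpace X]
    [MeasurableSpace X] [BorelSpace X]
    (x0 : X) (ρf : ℝ → ℝ) (hρf : Continuous ρf) (a : ℝ≥0∞) :
    IsOpen {p : ProbabilityMeasure X × ℝ |
      (p.1 : Measure X) (Metric.sphere x0 (ρf p.2)) < a} := by
  rw [isOpen_iff_mem_nhds]
  rintro ⟨μ, t⟩ (hμt : (μ : Measure X) (Metric.sphere x0 (ρf t)) < a)
  set ρ := ρf t with hρ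
  set A : ℝ → Set X := fun δ => {y | |dist y x0 - ρ| ≤ δ} with hA
  have hA_closed : ∀ δ, IsClosed (A δ) := fun δ =>
    isClosed_le (((continuous_id.dist continuous_const).sub continuous_const).abs) continuous_const
  have hA_meas : ∀ δ, MeasurableSet (A δ) := fun δ => (hA_closed δ).measurableSet
  have h_inter : (⋂ n : ℕ, A (1/(n+1))) = Metric.sphere x0 ρ := by
    ext y
    simp only [Set.mem_iInter, Metric.mem_sphere, hA, Set.mem_setOf_eq]
    constructor
    · intro h
      have h0 : |dist y x0 - ρ| ≤ 0 := by
        by_contra hpos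
        push_neg at hpos
        obtain ⟨n, hn⟩ := exists_nat_one_div_lt hpos
        exact absurd (h n) (by push_cast; linarith)
      have := abs_nonneg (dist y x0 - ρ)
      have : |dist y x0 - ρ| = 0 := le_antisymm h0 this
      linarith [abs_eq_zero.mp this]
    · intro h n
      rw [h]
      simp
      positivity
  have h_anti : Antitone fun n : ℕ => A (1/(n+1)) := by
    intro i j hij y hy
    simp only [hA, Set.mem_setOf_eq] at hy ⊢
    have hij' : (i:ℝ) ≤ j := Nat.cast_le.2 hij
    have h2 : (1:ℝ)/(j+1) ≤ 1/(i+1) := by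
      apply one_div_le_one_div_of_le <;> linarith
    linarith
  have h_tendsto := tendsto_measure_iInter_atTop (μ := (μ : Measure X))
    (s := fun n : ℕ => A (1/(n+1)))
    (fun n => (hA_meas (1/(n+1))).nullMeasurableSet) h_anti ⟨0, measure_ne_top _ _⟩
  rw [h_inter] at h_tendsto
  obtain ⟨n, hn⟩ := (h_tendsto.eventually_lt_const hμt).exists
  set δ : ℝ := 1/(n+1) with hδ
  have δpos : 0 < δ := by positivity
  have εpos : 0 < δ/2 := by positivity
  set g := thickenedIndicator εpos (A (δ/2)) with hg
  have g_le : ∀ y, (g y : ℝ≥0∞) ≤ (Metric.thickening (δ/2) (A (δ/2))).indicator (fun _ => 1) y := by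
    intro y
    by_cases hy : y ∈ Metric.thickening (δ/2) (A (δ/2))
    · rw [Set.indicator_of_mem hy]
      exact_mod_cast thickenedIndicator_le_one εpos _ y
    · rw [Set.indicator_of_notMem hy, thickenedIndicator_zero εpos _ hy]
      simp
  have h_thick_sub : Metric.thickening (δ/2) (A (δ/2)) ⊆ A δ := by
    intro y hy
    obtain ⟨z, hz, hyz⟩ := Metric.mem_thickening_iff.mp hy
    have h1 : |dist y x0 - dist z x0| ≤ dist y z := abs_dist_sub_le _ _ _
    have : |dist y x0 - ρ| ≤ |dist y x0 - dist z x0| + |dist z x0 - ρ| := by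
      calc |dist y x0 - ρ| = |(dist y x0 - dist z x0) + (dist z x0 - ρ)| := by ring_nf
        _ ≤ _ := abs_add_le _ _
    simp only [hA, Set.mem_setOf_eq] at hz ⊢
    linarith
  have hg_int : ∀ ν : ProbabilityMeasure X,
      ∫⁻ y, (g y : ℝ≥0∞) ∂(ν : Measure X) ≤ (ν : Measure X) (A δ) := by
    intro ν
    calc ∫⁻ y, (g y : ℝ≥0∞) ∂(ν : Measure X)
        ≤ ∫⁻ y, (Metric.thickening (δ/2) (A (δ/2))).indicator (fun _ => 1) y ∂(ν : Measure X) :=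
          lintegral_mono g_le
      _ = (ν : Measure X) (Metric.thickening (δ/2) (A (δ/2))) :=
          lintegral_indicator_one isOpen_thickening.measurableSet
      _ ≤ (ν : Measure X) (A δ) := measure_mono h_thick_sub
  set U : Set (ProbabilityMeasure X) :=
    {ν | ∫⁻ y, (g y : ℝ≥0∞) ∂(ν : Measure X) < a} with hU
  have hU_open : IsOpen U := by
    have hcont : Continuous fun ν : ProbabilityMeasure X =>
        ∫⁻ y, (g y : ℝ≥0∞) ∂(ν : Measure X) := by
      rw [continuous_iff_continuousAt]
      intro ν₀
      exact (ProbabilityMeasure.tendsto_iff_forall_lintegral_tendsto.mp tendsto_id) g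
    exact isOpen_Iio.preimage hcont
  have hμU : μ ∈ U := lt_of_le_of_lt (le_trans (hg_int μ) (le_refl _)) hn
  rw [mem_nhds_prod_iff]
  refine ⟨U, hU_open.mem_nhds hμU, ρf ⁻¹' Metric.ball ρ (δ/2),
    (Metric.isOpen_ball.preimage hρf).mem_nhds (by simp [Metric.mem_ball, εpos, hρ]), ?_⟩
  rintro ⟨ν, u⟩ ⟨hν, hu⟩
  simp only [Set.mem_setOf_eq]
  have h_sub : Metric.sphere x0 (ρf u) ⊆ A (δ/2) := by
    intro y hy
    simp only [Metric.mem_sphere] at hy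
    simp only [hA, Set.mem_setOf_eq, hy]
    have := Metric.mem_ball.mp hu
    rw [Real.dist_eq] at this
    exact le_of_lt this
  calc (ν : Measure X) (Metric.sphere x0 (ρf u)) ≤ (ν : Measure X) (A (δ/2)) := measure_mono h_sub
    _ ≤ ∫⁻ y, (g y : ℝ≥0∞) ∂(ν : Measure X) :=
        measure_le_lintegral_thickenedIndicator _ (hA_meas _) εpos
    _ < a := hν

lemma finite_heavy_radii {X : Type*} [MetricSpace X]
    [MeasurableSpace X] [BorelSpace X]
    (μ : Measure X) [IsProbabilityMeasure μ] (x0 : X) {c : ℝ≥0∞} (hc : c ≠ 0) :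
    {ρ : ℝ | c ≤ μ (Metric.sphere x0 ρ)}.Finite := by
  by_contra hfin
  rw [← Set.Infinite] at hfin
  obtain ⟨N, hN⟩ := ENNReal.exists_inv_nat_lt hc
  have hN0 : N ≠ 0 := by
    rintro rfl
    simp at hN
  set e := hfin.natEmbedding with he
  have hdisj : Pairwise (Function.onFun Disjoint
      fun j : Fin N => Metric.sphere x0 ((e j : ℝ))) := by
    intro i j hij
    have hne : ((e (i : ℕ)) : ℝ) ≠ ((e (j : ℕ)) : ℝ) := by
      intro h
      exact hij (Fin.ext (e.injective (Subtype.ext h)))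
    rw [Function.onFun, Set.disjoint_left]
    intro y h1 h2
    rw [Metric.mem_sphere] at h1 h2
    exact hne (h1 ▸ h2 ▸ rfl)
  have hmeas : μ (⋃ j : Fin N, Metric.sphere x0 ((e j : ℝ)))
      = ∑' j : Fin N, μ (Metric.sphere x0 ((e j : ℝ))) :=
    measure_iUnion hdisj (fun j => Metric.isClosed_sphere.measurableSet)
  have hle1 : ∑' j : Fin N, μ (Metric.sphere x0 ((e j : ℝ))) ≤ 1 := by
    rw [← hmeas]; exact prob_le_one
  have hge : (N : ℝ≥0∞) * c ≤ ∑' j : Fin N, μ (Metric.sphere x0 ((e j : ℝ))) := by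
    rw [tsum_fintype]
    calc (N : ℝ≥0∞) * c = ∑ _j : Fin N, c := by
          simp [Finset.sum_const, nsmul_eq_mul]
      _ ≤ ∑ j : Fin N, μ (Metric.sphere x0 ((e j : ℝ))) :=
          Finset.sum_le_sum (fun j _ => (e (j : ℕ)).2)
  have hlt : (1 : ℝ≥0∞) < N * c := by
    have h0 : (N : ℝ≥0∞) ≠ 0 := by exact_mod_cast hN0
    have ht : (N : ℝ≥0∞) ≠ ⊤ := ENNReal.natCast_ne_top N
    calc (1 : ℝ≥0∞) = (N : ℝ≥0∞) * (N : ℝ≥0∞)⁻¹ := (ENNReal.mul_inv_cancel h0 ht).symm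
      _ < N * c := by
          rw [ENNReal.mul_lt_mul_iff_right h0 ht]
          exact hN
  exact absurd (le_trans hge hle1) (not_le.mpr hlt)

lemma perfect_avoid {C : Set ℝ} (hC : Perfect C) {t : ℝ} (ht : t ∈ C) {ε : ℝ} (hε : 0 < ε)
    {B : Set ℝ} (hB : B.Finite) : ∃ t', t' ∈ C ∧ |t' - t| < ε ∧ t' ∉ B := by
  have hacc := hC.acc t ht
  rw [accPt_iff_nhds] at hacc
  have hU : Metric.ball t ε \ (B \ {t}) ∈ 𝓝 t := by
    rw [Set.diff_eq]
    refine Filter.inter_mem (Metric.ball_mem_nhds t hε) ?_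
    refine IsOpen.mem_nhds (hB.subset Set.diff_subset).isClosed.isOpen_compl ?_
    simp
  obtain ⟨y, ⟨⟨hyball, hyB⟩, hyC⟩, hyt⟩ := hacc _ hU
  refine ⟨y, hyC, ?_, ?_⟩
  · rw [← Real.dist_eq]; exact Metric.mem_ball.mp hyball
  · intro hyB'
    exact hyB ⟨hyB', hyt⟩

lemma step_lemma {X : Type*} [MetricSpace X] [CompactSpace X]
    [MeasurableSpace X] [BorelSpace X]
    (m : ℕ → ℕ) (x : ∀ k : ℕ, Fin (m k) → X)
    (r : ℕ → ℝ → ℝ) (hr_cont : ∀ k, Continuous (r k)) (hr_mono : ∀ k, StrictMono (r k))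
    {C : Set ℝ} (hC_perfect : Perfect C)
    {E : Set (ProbabilityMeasure X)} (hE_compact : IsCompact E)
    (hE_td : IsTotallyDisconnected E)
    (n : ℕ) (s δ : ↥E → ℝ) (hs_cont : Continuous s) (hδ_cont : Continuous δ)
    (hsC : ∀ μ, s μ ∈ C) (hδpos : ∀ μ, 0 < δ μ) :
    ∃ s' δ' : ↥E → ℝ, Continuous s' ∧ Continuous δ' ∧ (∀ μ, s' μ ∈ C) ∧ (∀ μ, 0 < δ' μ) ∧
      (∀ μ, |s' μ - s μ| ≤ δ μ / 2 ∧ δ' μ ≤ δ μ / 2) ∧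
      (∀ (μ : ↥E) (u : ℝ), |u - s' μ| ≤ δ' μ → ∀ k < n, ∀ i : Fin (m k),
        ((μ : ProbabilityMeasure X) : Measure X) (Metric.sphere (x k i) (r k u))
          < ((n : ℝ≥0∞))⁻¹) := by
  classical
  haveI : CompactSpace ↥E := isCompact_iff_compactSpace.mp hE_compact
  haveI : TotallyDisconnectedSpace ↥E := totallyDisconnectedSpace_subtype_iff.mpr hE_td
  set a : ℝ≥0∞ := ((n : ℝ≥0∞))⁻¹ with ha_def
  have ha : a ≠ 0 := ENNReal.inv_ne_zero.mpr (ENNReal.natCast_ne_top n)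
  -- the bad set for each measure
  set Bad : ↥E → Set ℝ := fun μ => {u : ℝ | ∃ k, k < n ∧ ∃ i : Fin (m k),
    a ≤ ((μ : ProbabilityMeasure X) : Measure X) (Metric.sphere (x k i) (r k u))} with hBad_def
  have hBadfin : ∀ μ, (Bad μ).Finite := by
    intro μ
    have hsub : Bad μ ⊆ ⋃ k ∈ Finset.range n, ⋃ i : Fin (m k),
        r k ⁻¹' {ρ | a ≤ ((μ : ProbabilityMeasure X) : Measure X) (Metric.sphere (x k i) ρ)} := by
      rintro u ⟨k, hk, i, hki⟩
      exact Set.mem_biUnion (Finset.mem_range.mpr hk) (Set.mem_iUnion.mpr ⟨i, hki⟩)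
    refine Set.Finite.subset ?_ hsub
    refine Set.Finite.biUnion (Finset.range n).finite_toSet (fun k _ => ?_)
    refine Set.finite_iUnion (fun i => ?_)
    exact Set.Finite.preimage ((hr_mono k).injective.injOn)
      (finite_heavy_radii _ (x k i) ha)
  -- the jointly open good set
  set G : Set (ProbabilityMeasure X × ℝ) := ⋂ k ∈ Finset.range n, ⋂ i : Fin (m k),
    {p : ProbabilityMeasure X × ℝ |
      (p.1 : Measure X) (Metric.sphere (x k i) (r k p.2)) < a} with hG_def
  have hG_open : IsOpen G :=
    isOpen_biInter_finset (fun k _ => isOpen_iInter_of_finite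
      (fun i => sphere_usc_open (x k i) (r k) (hr_cont k) a))
  have hG_mem : ∀ (ν : ProbabilityMeasure X) (u : ℝ), (ν, u) ∈ G ↔
      ∀ k < n, ∀ i : Fin (m k),
        (ν : Measure X) (Metric.sphere (x k i) (r k u)) < a := by
    intro ν u
    simp only [hG_def, Set.mem_iInter, Set.mem_setOf_eq, Finset.mem_range]
  -- for each μ, a clopen neighborhood with a good constant value
  have key : ∀ μ : ↥E, ∃ (K : Set ↥E) (t' η' : ℝ), IsClopen K ∧ μ ∈ K ∧ t' ∈ C ∧ 0 < η' ∧
      ∀ ν ∈ K, |t' - s ν| < δ ν / 2 ∧ η' ≤ δ ν / 2 ∧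
        ∀ u, |u - t'| ≤ η' → ∀ k < n, ∀ i : Fin (m k),
          ((ν : ProbabilityMeasure X) : Measure X) (Metric.sphere (x k i) (r k u)) < a := by
    intro μ
    obtain ⟨t', ht'C, ht'near, ht'B⟩ :=
      perfect_avoid hC_perfect (hsC μ) (half_pos (hδpos μ)) (hBadfin μ)
    obtain ⟨η, hηpos, hball⟩ := Metric.isOpen_iff.mp (hBadfin μ).isClosed.isOpen_compl t' ht'B
    set η' : ℝ := min (η/2) (δ μ / 8) with hη'_def
    have hη'pos : 0 < η' := lt_min (by linarith) (by linarith [hδpos μ])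
    have havoid : ∀ u, |u - t'| ≤ η' → u ∉ Bad μ := by
      intro u hu
      apply hball
      rw [Metric.mem_ball, Real.dist_eq]
      calc |u - t'| ≤ η' := hu
        _ ≤ η/2 := min_le_left _ _
        _ < η := by linarith
    have hsub : ({(μ : ProbabilityMeasure X)} ×ˢ Metric.closedBall t' η') ⊆ G := by
      rintro ⟨ν, u⟩ ⟨hν, hu⟩
      simp only [Set.mem_singleton_iff] at hν
      subst hν
      rw [hG_mem]
      intro k hk i
      by_contra hge
      push_neg at hge
      exact havoid u (by rwa [Metric.mem_closedBall, Real.dist_eq] at hu) ⟨k, hk, i, hge⟩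
    obtain ⟨U, V, hU_open, hV_open, hμU, hBV, hUV⟩ :=
      generalized_tube_lemma isCompact_singleton (isCompact_closedBall t' η') hG_open hsub
    set W : Set ↥E := (Subtype.val ⁻¹' U) ∩
      ({ν : ↥E | |t' - s ν| < δ ν / 2} ∩ {ν : ↥E | η' < δ ν / 2}) with hW_def
    have hW_open : IsOpen W := by
      refine (hU_open.preimage continuous_subtype_val).inter (IsOpen.inter ?_ ?_)
      · exact isOpen_lt ((continuous_const.sub hs_cont).abs) (hδ_cont.div_const 2)
      · exact isOpen_lt continuous_const (hδ_cont.div_const 2)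
    have hμW : μ ∈ W := by
      refine ⟨hμU rfl, ht'near, ?_⟩
      simp only [Set.mem_setOf_eq]
      calc η' ≤ δ μ / 8 := min_le_right _ _
        _ < δ μ / 2 := by linarith [hδpos μ]
    obtain ⟨K, hK_clopen, hμK, hKW⟩ := compact_exists_isClopen_in_isOpen hW_open hμW
    refine ⟨K, t', η', hK_clopen, hμK, ht'C, hη'pos, fun ν hν => ?_⟩
    obtain ⟨hνU, hν1, hν2⟩ := hKW hν
    refine ⟨hν1, le_of_lt hν2, fun u hu k hk i => ?_⟩
    have : ((ν : ProbabilityMeasure X), u) ∈ G := by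
      apply hUV
      exact ⟨hνU, hBV (by rwa [Metric.mem_closedBall, Real.dist_eq])⟩
    exact (hG_mem _ _).mp this k hk i
  choose K t' η' hK hμK ht'C hη'pos hprop using key
  -- finite subcover and minimal-index gluing
  obtain ⟨F, hF⟩ := isCompact_univ.elim_finite_subcover K (fun μ => (hK μ).2)
    (fun ν _ => Set.mem_iUnion.mpr ⟨ν, hμK ν⟩)
  set c : Fin F.card → ↥E := fun j => ((F.equivFin.symm j : F) : ↥E) with hc_def
  set J : ↥E → Finset (Fin F.card) :=
    fun ν => Finset.univ.filter (fun j => ν ∈ K (c j)) with hJ_def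
  have hJne : ∀ ν, (J ν).Nonempty := by
    intro ν
    obtain ⟨μF, hμF, hνK⟩ := Set.mem_iUnion₂.mp (hF (Set.mem_univ ν))
    refine ⟨F.equivFin ⟨μF, hμF⟩, ?_⟩
    simp only [hJ_def, Finset.mem_filter, Finset.mem_univ, true_and, hc_def,
      Equiv.symm_apply_apply]
    exact hνK
  set idx : ↥E → Fin F.card := fun ν => (J ν).min' (hJne ν) with hidx_def
  have hidx_memJ : ∀ ν, idx ν ∈ J ν := fun ν => Finset.min'_mem _ _
  have hidx_mem : ∀ ν, ν ∈ K (c (idx ν)) := by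
    intro ν
    have := hidx_memJ ν
    simp only [hJ_def, Finset.mem_filter, Finset.mem_univ, true_and] at this
    exact this
  have hidx_min : ∀ ν j, ν ∈ K (c j) → idx ν ≤ j := by
    intro ν j hj
    apply Finset.min'_le
    simp only [hJ_def, Finset.mem_filter, Finset.mem_univ, true_and]
    exact hj
  have hlocal : ∀ ν : ↥E, ∃ O : Set ↥E, IsOpen O ∧ ν ∈ O ∧ ∀ ν' ∈ O, idx ν' = idx ν := by
    intro ν
    set O : Set ↥E := K (c (idx ν)) ∩
      (⋃ j ∈ Finset.univ.filter (fun j => j < idx ν), K (c j))ᶜ with hO_def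
    have hcl : IsClosed (⋃ j ∈ Finset.univ.filter (fun j => j < idx ν), K (c j)) :=
      (Finset.univ.filter (fun j => j < idx ν)).finite_toSet.isClosed_biUnion
        (fun j _ => (hK (c j)).1)
    have hO_open : IsOpen O := (hK _).2.inter hcl.isOpen_compl
    have hνO : ν ∈ O := by
      refine ⟨hidx_mem ν, ?_⟩
      intro hmem
      obtain ⟨j, hj, hνj⟩ := Set.mem_iUnion₂.mp hmem
      rw [Finset.mem_filter] at hj
      exact absurd (hidx_min ν j hνj) (not_le.mpr hj.2)
    refine ⟨O, hO_open, hνO, ?_⟩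
    rintro ν' ⟨hν'K, hν'c⟩
    have h1 : idx ν' ≤ idx ν := hidx_min ν' _ hν'K
    rcases lt_or_eq_of_le h1 with hlt | heq
    · exfalso
      apply hν'c
      exact Set.mem_iUnion₂.mpr ⟨idx ν', Finset.mem_filter.mpr ⟨Finset.mem_univ _, hlt⟩,
        hidx_mem ν'⟩
    · exact heq
  refine ⟨fun ν => t' (c (idx ν)), fun ν => η' (c (idx ν)), ?_, ?_, ?_, ?_, ?_, ?_⟩
  · rw [continuous_iff_continuousAt]
    intro ν
    obtain ⟨O, hO_open, hνO, hOconst⟩ := hlocal ν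
    refine Filter.EventuallyEq.continuousAt (y := t' (c (idx ν))) ?_
    exact Filter.eventuallyEq_of_mem (hO_open.mem_nhds hνO)
      (fun ν' hν' => by simp only [hOconst ν' hν'])
  · rw [continuous_iff_continuousAt]
    intro ν
    obtain ⟨O, hO_open, hνO, hOconst⟩ := hlocal ν
    refine Filter.EventuallyEq.continuousAt (y := η' (c (idx ν))) ?_
    exact Filter.eventuallyEq_of_mem (hO_open.mem_nhds hνO)
      (fun ν' hν' => by simp only [hOconst ν' hν'])
  · exact fun ν => ht'C _
  · exact fun ν => hη'pos _
  · intro ν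
    obtain ⟨h1, h2, _⟩ := hprop (c (idx ν)) ν (hidx_mem ν)
    exact ⟨h1.le, h2⟩
  · intro ν u hu k hk i
    obtain ⟨_, _, h3⟩ := hprop (c (idx ν)) ν (hidx_mem ν)
    exact h3 u hu k hk i

/-- Concrete continuous selector lemma (Lemma 3.4): given, for each `k`, finitely
many centers and a continuous strictly increasing radius function `r_k`, a Cantor
set `C ⊆ ℝ` and a compact zero-dimensional set `E` of probability measures on `X`,
there is a continuous selector `s : E → C` such that for each `μ ∈ E` all unions of
spheres of radii `r_k(s(μ))` are `μ`-null. -/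
theorem continuous_selector_concrete
    (X : Type*) [MetricSpace X] [CompactSpace X]
    [MeasurableSpace X] [BorelSpace X]
    (m : ℕ → ℕ) (x : ∀ k : ℕ, Fin (m k) → X)
    (r : ℕ → ℝ → ℝ) (hr_cont : ∀ k, Continuous (r k)) (hr_mono : ∀ k, StrictMono (r k))
    (C : Set ℝ) (hC_ne : C.Nonempty) (hC_compact : IsCompact C)
    (hC_perfect : Perfect C) (hC_td : IsTotallyDisconnected C)
    (E : Set (ProbabilityMeasure X)) (hE_ne : E.Nonempty) (hE_compact : IsCompact E)
    (hE_td : IsTotallyDisconnected E) :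
    ∃ s : E → C, Continuous s ∧
      ∀ (μ : E) (k : ℕ),
        (μ : ProbabilityMeasure X)
          (⋃ i : Fin (m k), Metric.sphere (x k i) (r k (s μ))) = 0 := by
  classical
  obtain ⟨t0, ht0⟩ := hC_ne
  -- the type of admissible pairs
  let T := {p : (↥E → ℝ) × (↥E → ℝ) //
    Continuous p.1 ∧ Continuous p.2 ∧ (∀ μ, p.1 μ ∈ C) ∧ (∀ μ, 0 < p.2 μ)}
  have step' : ∀ (n : ℕ) (p : T), ∃ q : T,
      (∀ μ, |q.1.1 μ - p.1.1 μ| ≤ p.1.2 μ / 2 ∧ q.1.2 μ ≤ p.1.2 μ / 2) ∧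
      (∀ (μ : ↥E) (u : ℝ), |u - q.1.1 μ| ≤ q.1.2 μ → ∀ k < n, ∀ i : Fin (m k),
        ((μ : ProbabilityMeasure X) : Measure X) (Metric.sphere (x k i) (r k u))
          < ((n : ℝ≥0∞))⁻¹) := by
    intro n p
    obtain ⟨s', δ', h1, h2, h3, h4, h5, h6⟩ := step_lemma m x r hr_cont hr_mono hC_perfect
      hE_compact hE_td n p.1.1 p.1.2 p.2.1 p.2.2.1 p.2.2.2.1 p.2.2.2.2
    exact ⟨⟨(s', δ'), h1, h2, h3, h4⟩, h5, h6⟩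
  choose f hf1 hf2 using step'
  set p0 : T := ⟨(fun _ => t0, fun _ => 1),
    continuous_const, continuous_const, fun _ => ht0, fun _ => one_pos⟩ with hp0
  set seq : ℕ → T := fun n => Nat.rec p0 (fun n q => f (n+1) q) n with hseq
  have seq_succ : ∀ n, seq (n+1) = f (n+1) (seq n) := fun n => rfl
  set sfun : ℕ → ↥E → ℝ := fun n => (seq n).1.1 with hsfun
  set dfun : ℕ → ↥E → ℝ := fun n => (seq n).1.2 with hdfun
  have hs_cont : ∀ n, Continuous (sfun n) := fun n => (seq n).2.1
  have hsC : ∀ n μ, sfun n μ ∈ C := fun n => (seq n).2.2.2.1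
  have hdpos : ∀ n μ, 0 < dfun n μ := fun n => (seq n).2.2.2.2
  have hstep : ∀ n μ, |sfun (n+1) μ - sfun n μ| ≤ dfun n μ / 2 ∧
      dfun (n+1) μ ≤ dfun n μ / 2 := by
    intro n μ
    have := hf1 (n+1) (seq n) μ
    rwa [← seq_succ n] at this
  have hinv : ∀ n (μ : ↥E) (u : ℝ), |u - sfun (n+1) μ| ≤ dfun (n+1) μ →
      ∀ k < n+1, ∀ i : Fin (m k),
      ((μ : ProbabilityMeasure X) : Measure X) (Metric.sphere (x k i) (r k u))
        < (((n+1 : ℕ) : ℝ≥0∞))⁻¹ := by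
    intro n
    have := hf2 (n+1) (seq n)
    rwa [← seq_succ n] at this
  have hd0 : ∀ μ, dfun 0 μ = 1 := fun μ => rfl
  have hdle : ∀ n μ, dfun n μ ≤ (1/2)^n := by
    intro n
    induction n with
    | zero => intro μ; rw [hd0]; norm_num
    | succ n ih => intro μ
                   calc dfun (n+1) μ ≤ dfun n μ / 2 := (hstep n μ).2
                     _ ≤ (1/2)^n / 2 := by linarith [ih μ]
                     _ = (1/2)^(n+1) := by ring
  have hdiff : ∀ n j μ, |sfun (n+j) μ - sfun n μ| ≤ dfun n μ - dfun (n+j) μ := by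
    intro n j
    induction j with
    | zero => intro μ; simp
    | succ j ih =>
        intro μ
        have h1 := (hstep (n+j) μ).1
        have h2 := (hstep (n+j) μ).2
        calc |sfun (n+(j+1)) μ - sfun n μ|
            = |(sfun (n+j+1) μ - sfun (n+j) μ) + (sfun (n+j) μ - sfun n μ)| := by
              rw [show n+(j+1) = n+j+1 from rfl]; ring_nf
          _ ≤ |sfun (n+j+1) μ - sfun (n+j) μ| + |sfun (n+j) μ - sfun n μ| := abs_add_le _ _
          _ ≤ dfun (n+j) μ / 2 + (dfun n μ - dfun (n+j) μ) := by linarith [ih μ]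
          _ ≤ dfun n μ - dfun (n+(j+1)) μ := by
              have := h2
              rw [show n+(j+1) = n+j+1 from rfl]
              linarith
  have hcau : ∀ μ, CauchySeq (fun n => sfun n μ) := by
    intro μ
    apply cauchySeq_of_le_geometric_two (C := 1)
    intro n
    rw [Real.dist_eq]
    have h1 := (hstep n μ).1
    have h2 := hdle n μ
    rw [abs_sub_comm]
    calc |sfun (n+1) μ - sfun n μ| ≤ dfun n μ / 2 := h1
      _ ≤ (1/2)^n / 2 := by linarith
      _ = 1 / 2 / 2^n := by rw [div_pow]; ring
  set slim : ↥E → ℝ := fun μ => limUnder atTop (fun n => sfun n μ) with hslim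
  have htend : ∀ μ, Tendsto (fun n => sfun n μ) atTop (𝓝 (slim μ)) :=
    fun μ => (hcau μ).tendsto_limUnder
  have hclose : ∀ n μ, dist (slim μ) (sfun n μ) ≤ dfun n μ := by
    intro n μ
    have h1 : Tendsto (fun j => dist (sfun (j+n) μ) (sfun n μ)) atTop
        (𝓝 (dist (slim μ) (sfun n μ))) :=
      (Tendsto.dist ((htend μ).comp (tendsto_add_atTop_nat n)) tendsto_const_nhds)
    refine le_of_tendsto h1 (Filter.Eventually.of_forall fun j => ?_)
    rw [Real.dist_eq, add_comm j n]
    calc |sfun (n+j) μ - sfun n μ| ≤ dfun n μ - dfun (n+j) μ := hdiff n j μ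
      _ ≤ dfun n μ := by linarith [hdpos (n+j) μ]
  have hslim_cont : Continuous slim := by
    have htu : TendstoUniformly (fun n μ => sfun n μ) slim atTop := by
      rw [Metric.tendstoUniformly_iff]
      intro ε hε
      have hpow : Tendsto (fun n : ℕ => (1/2 : ℝ)^n) atTop (𝓝 0) :=
        tendsto_pow_atTop_nhds_zero_of_lt_one (by norm_num) (by norm_num)
      filter_upwards [hpow.eventually_lt_const hε] with n hn μ
      calc dist (slim μ) (sfun n μ) ≤ dfun n μ := hclose n μ
        _ ≤ (1/2)^n := hdle n μ
        _ < ε := hn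
    exact htu.continuous (Filter.Eventually.of_forall hs_cont).frequently
  have hslimC : ∀ μ, slim μ ∈ C :=
    fun μ => hC_compact.isClosed.mem_of_tendsto (htend μ)
      (Filter.Eventually.of_forall fun n => hsC n μ)
  have hnull : ∀ (μ : ↥E) (k : ℕ) (i : Fin (m k)),
      ((μ : ProbabilityMeasure X) : Measure X) (Metric.sphere (x k i) (r k (slim μ))) = 0 := by
    intro μ k i
    by_contra h0
    obtain ⟨N, hN⟩ := ENNReal.exists_inv_nat_lt h0
    set M : ℕ := max N (k+1) with hM
    have hkM : k < M := lt_of_lt_of_le (Nat.lt_succ_self k) (le_max_right _ _)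
    have hM1 : ∃ n, M = n + 1 := ⟨M - 1, by omega⟩
    obtain ⟨n, hn⟩ := hM1
    have hdist : |slim μ - sfun M μ| ≤ dfun M μ := by
      rw [← Real.dist_eq]; exact hclose M μ
    have hlt := hinv n μ (slim μ) (by rwa [hn] at hdist) k (by omega) i
    rw [← hn] at hlt
    have hmono : ((M : ℝ≥0∞))⁻¹ ≤ ((N : ℝ≥0∞))⁻¹ := by
      gcongr
      exact_mod_cast le_max_left N (k+1)
    exact absurd (lt_trans hlt (lt_of_le_of_lt hmono hN)) (lt_irrefl _)
  refine ⟨fun μ => ⟨slim μ, hslimC μ⟩, Continuous.subtype_mk hslim_cont _, ?_⟩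
  intro μ k
  rw [ProbabilityMeasure.null_iff_toMeasure_null]
  exact measure_iUnion_null (fun i => hnull μ k i)
end

section
/- Let X be a metrizable topological space and let (E_n)_{n≥1} be a sequence of compact totally disconnected subsets of X. Then there exists a sequence (F_n)_{n≥1} of compact subsets of X that are pairwise disjoint, satisfy ⋃_{n≥1} F_n = ⋃_{n≥1} E_n, and such that each F_n is contained in E_m for some m (depending on n). -/
open Set TopologicalSpace

/-- Auxiliary: a compact totally disconnected subset of a metrizable space, intersected
with an open set, is a countable disjoint union of compact subsets of `E`. -/
lemma aux_clopen_decomp (X : Type*) [TopologicalSpace X]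
    [TopologicalSpace.MetrizableSpace X]
    {E U : Set X} (hE : IsCompact E) (htd : IsTotallyDisconnected E) (hU : IsOpen U) :
    ∃ D : ℕ → Set X, (∀ i, IsCompact (D i)) ∧
      (Pairwise fun i j => Disjoint (D i) (D j)) ∧
      (⋃ i, D i) = E ∩ U ∧ ∀ i, D i ⊆ E := by
  letI : MetricSpace X := TopologicalSpace.metrizableSpaceMetric X
  haveI : CompactSpace E := isCompact_iff_compactSpace.mp hE
  haveI : TotallyDisconnectedSpace E := totallyDisconnectedSpace_subtype_iff.mpr htd
  set V : Set E := Subtype.val ⁻¹' U with hVdef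
  have hVopen : IsOpen V := hU.preimage continuous_subtype_val
  -- V is a union of clopen sets
  have hcov : ⋃₀ {c : Set E | IsClopen c ∧ c ⊆ V} = V := by
    apply subset_antisymm
    · rintro x ⟨c, ⟨_, hcV⟩, hxc⟩; exact hcV hxc
    · intro x hx
      obtain ⟨c, hc, hxc, hcV⟩ := compact_exists_isClopen_in_isOpen hVopen hx
      exact ⟨c, ⟨hc, hcV⟩, hxc⟩
  obtain ⟨T, hTc, hTsub, hTU⟩ := isOpen_sUnion_countable
    {c : Set E | IsClopen c ∧ c ⊆ V} (fun s hs => hs.1.2)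
  rw [hcov] at hTU
  -- enumerate T together with ∅
  have hTc' : (insert (∅ : Set E) T).Countable := hTc.insert _
  obtain ⟨f, hf⟩ := (Set.countable_iff_exists_surjective ⟨∅, mem_insert _ _⟩).mp hTc'
  set g : ℕ → Set E := fun n => (f n : Set E) \ ⋃ i ∈ Finset.range n, (f i : Set E) with hgdef
  have hfclopen : ∀ n, IsClopen (f n : Set E) := by
    intro n
    rcases (f n).2 with h | h
    · rw [h]; exact isClopen_empty
    · exact (hTsub h).1
  have hfsub : ∀ n, (f n : Set E) ⊆ V := by
    intro n
    rcases (f n).2 with h | h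
    · rw [h]; exact empty_subset _
    · exact (hTsub h).2
  have hgclopen : ∀ n, IsClopen (g n) := fun n =>
    (hfclopen n).diff (Set.Finite.isClopen_biUnion (Finset.range n).finite_toSet
      fun i _ => hfclopen i)
  have hgsub : ∀ n, g n ⊆ (f n : Set E) := fun n => diff_subset
  classical
  have hgunion : ⋃ n, g n = V := by
    apply subset_antisymm
    · exact iUnion_subset fun n => (hgsub n).trans (hfsub n)
    · intro x hx
      have hxT : x ∈ ⋃₀ T := hTU ▸ hx
      obtain ⟨t, htT, hxt⟩ := hxT
      obtain ⟨n, hn⟩ := hf ⟨t, mem_insert_of_mem _ htT⟩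
      have hex : ∃ n, x ∈ (f n : Set E) := ⟨n, by rw [hn]; exact hxt⟩
      refine mem_iUnion.mpr ⟨Nat.find hex, Nat.find_spec hex, ?_⟩
      simp only [Finset.mem_range, mem_iUnion, not_exists]
      intro i hi hxi
      exact Nat.find_min hex hi hxi
  have hgkey : ∀ i j, i < j → Disjoint (g i) (g j) := by
    intro i j h
    refine disjoint_left.mpr fun x hxi hxj => ?_
    exact hxj.2 (mem_biUnion (Finset.mem_range.mpr h) (hgsub i hxi))
  have hgdisj : Pairwise fun i j => Disjoint (g i) (g j) := by
    intro i j hij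
    rcases hij.lt_or_gt with h | h
    · exact hgkey i j h
    · exact (hgkey j i h).symm
  refine ⟨fun n => Subtype.val '' g n, ?_, ?_, ?_, ?_⟩
  · intro n
    exact (((hgclopen n).1).isCompact).image continuous_subtype_val
  · intro i j hij
    exact (Set.disjoint_image_iff Subtype.val_injective).mpr (hgdisj hij)
  · rw [← image_iUnion, hgunion, hVdef, Subtype.image_preimage_coe]
  · intro n
    exact (image_mono (subset_univ _)).trans (by simp [Subtype.coe_image_univ])

/-- Lemma 4.2: a countable union of compact zero-dimensional subsets of a metrizable
space can be re-represented as a countable union of pairwise disjoint compact sets,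
each contained in one of the original sets. -/
theorem sigma_compact_zero_dim_disjointification
    (X : Type*) [TopologicalSpace X] [TopologicalSpace.MetrizableSpace X]
    (E : ℕ → Set X)
    (hE_compact : ∀ n, IsCompact (E n))
    (hE_td : ∀ n, IsTotallyDisconnected (E n)) :
    ∃ F : ℕ → Set X,
      (∀ n, IsCompact (F n)) ∧
      (Pairwise fun n m => Disjoint (F n) (F m)) ∧
      (⋃ n, F n) = (⋃ n, E n) ∧
      (∀ n, ∃ m, F n ⊆ E m) := by
  classical
  letI : MetricSpace X := TopologicalSpace.metrizableSpaceMetric X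
  set C : ℕ → Set X := fun n => ⋃ i ∈ Finset.range n, E i with hCdef
  have hCclosed : ∀ n, IsClosed (C n) :=
    fun n => (Finset.range n).finite_toSet.isClosed_biUnion
      fun i _ => (hE_compact i).isClosed
  have hCopen : ∀ n, IsOpen (C n)ᶜ := fun n => (hCclosed n).isOpen_compl
  choose D hDcomp hDdisj hDunion hDsub using
    fun n => aux_clopen_decomp X (hE_compact n) (hE_td n) (hCopen n)
  have hDsub' : ∀ n i, D n i ⊆ E n ∩ (C n)ᶜ := by
    intro n i
    rw [← hDunion n]
    exact subset_iUnion _ i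
  set p : ℕ ≃ ℕ × ℕ := (Denumerable.eqv (ℕ × ℕ)).symm with hp
  refine ⟨fun k => D (p k).1 (p k).2, fun k => hDcomp _ _, ?_, ?_, fun k => ⟨(p k).1, hDsub _ _⟩⟩
  · -- pairwise disjoint
    have key0 : ∀ n m i j, n < m → Disjoint (D n i) (D m j) := by
      intro n m i j h
      refine disjoint_left.mpr fun x hx hx' => ?_
      have h1 : x ∈ E n := (hDsub' n i hx).1
      have h2 : x ∈ (C m)ᶜ := (hDsub' m j hx').2
      exact h2 (mem_biUnion (Finset.mem_range.mpr h) h1)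
    have key : ∀ n m i j, n ≠ m → Disjoint (D n i) (D m j) := by
      intro n m i j hnm
      rcases hnm.lt_or_gt with h | h
      · exact key0 n m i j h
      · exact (key0 m n j i h).symm
    intro k l hkl
    have hpkl : p k ≠ p l := fun h => hkl (p.injective h)
    by_cases h1 : (p k).1 = (p l).1
    · have h2 : (p k).2 ≠ (p l).2 := by
        intro h2; exact hpkl (Prod.ext h1 h2)
      show Disjoint (D (p k).1 (p k).2) (D (p l).1 (p l).2)
      rw [h1]
      exact hDdisj (p l).1 h2
    · exact key _ _ _ _ h1
  · -- union
    have h1 : (⋃ k, D (p k).1 (p k).2) = ⋃ q : ℕ × ℕ, D q.1 q.2 :=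
      p.surjective.iUnion_comp fun q => D q.1 q.2
    rw [h1, iUnion_prod']
    have h2 : (⋃ n, ⋃ i, D n i) = ⋃ n, E n ∩ (C n)ᶜ := by
      exact iUnion_congr hDunion
    rw [h2]
    apply subset_antisymm
    · exact iUnion_mono fun n => inter_subset_left
    · intro x hx
      obtain ⟨n, hn⟩ := mem_iUnion.mp hx
      have hex : ∃ n, x ∈ E n := ⟨n, hn⟩
      refine mem_iUnion.mpr ⟨Nat.find hex, Nat.find_spec hex, ?_⟩
      simp only [hCdef, Finset.mem_range, mem_iUnion, mem_compl_iff, not_exists]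
      intro i hi hxi
      exact Nat.find_min hex hi hxi
end

section
/- Let V be a real normed vector space, let K ⊆ V be convex, and let F ⊆ K be a convex face of K, i.e. F is convex and whenever a point of F lies in the open segment between two points of K, both of these points lie in F. Fix ε > 0 and define a set-valued map Θ on K by Θ(x) = {x} for x ∈ F, and Θ(x) = {y ∈ F : ‖x − y‖ < ε} for x ∈ K \ F. Then Θ is convex: for all x, y ∈ K and all α ∈ (0,1), the set {α·u + (1−α)·v : u ∈ Θ(x), v ∈ Θ(y)} is contained in Θ(α·x + (1−α)·y). -/
/-- Convexity of the multifunction `Θ` from the proof of the retraction lemma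
(Lemma 4.3): if `F` is a convex face of a convex set `K` in a normed space and
`Θ(x) = {x}` for `x ∈ F`, `Θ(x) = {y ∈ F : ‖x − y‖ < ε}` for `x ∈ K \ F`, then
`α·Θ(x) + (1−α)·Θ(y) ⊆ Θ(α·x + (1−α)·y)` for `x, y ∈ K` and `α ∈ (0,1)`. -/
theorem theta_multifunction_convex
    (V : Type*) [NormedAddCommGroup V] [NormedSpace ℝ V]
    (K F : Set V) (hK : Convex ℝ K) (hF : Convex ℝ F) (hFK : IsExtreme ℝ K F)
    (ε : ℝ) (hε : 0 < ε)
    (Θ : V → Set V)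
    (hΘF : ∀ x ∈ F, Θ x = {x})
    (hΘK : ∀ x ∈ K \ F, Θ x = {y ∈ F | ‖x - y‖ < ε}) :
    ∀ x ∈ K, ∀ y ∈ K, ∀ α : ℝ, 0 < α → α < 1 →
      Set.image2 (fun u v => α • u + (1 - α) • v) (Θ x) (Θ y)
        ⊆ Θ (α • x + (1 - α) • y) := by
  intro x hx y hy α hα hα1
  have hα' : (0:ℝ) < 1 - α := by linarith
  have hαle : (0:ℝ) ≤ α := hα.le
  have hα'le : (0:ℝ) ≤ 1 - α := hα'.le
  set z := α • x + (1 - α) • y with hz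
  have hzK : z ∈ K := hK hx hy hαle hα'le (by ring)
  have hzseg : z ∈ openSegment ℝ x y := ⟨α, 1 - α, hα, hα', by ring, rfl⟩
  rintro w ⟨u, hu, v, hv, rfl⟩
  by_cases hxF : x ∈ F <;> by_cases hyF : y ∈ F
  · -- both in F
    have hzF : z ∈ F := hF hxF hyF hαle hα'le (by ring)
    rw [hΘF x hxF] at hu
    rw [hΘF y hyF] at hv
    rw [hΘF z hzF]
    simp only [Set.mem_singleton_iff] at hu hv ⊢
    rw [hu, hv]
  · -- x ∈ F, y ∉ F
    have hzF : z ∉ F := fun h => hyF (hFK.right_mem_of_mem_openSegment hx hy h hzseg)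
    rw [hΘF x hxF] at hu
    rw [hΘK y ⟨hy, hyF⟩] at hv
    rw [hΘK z ⟨hzK, hzF⟩]
    obtain ⟨hvF, hvε⟩ := hv
    refine ⟨hF (hu ▸ hxF) hvF hαle hα'le (by ring), ?_⟩
    have : z - (α • u + (1 - α) • v) = (1 - α) • (y - v) := by
      rw [hz, hu]; rw [smul_sub]; abel
    rw [this, norm_smul, Real.norm_eq_abs, abs_of_pos hα']
    calc (1 - α) * ‖y - v‖ < 1 * ε := by
          apply mul_lt_mul' (by linarith) hvε (norm_nonneg _) one_pos
      _ = ε := one_mul ε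
  · -- x ∉ F, y ∈ F
    have hzF : z ∉ F := fun h => hxF (hFK.2 hx hy h hzseg)
    rw [hΘK x ⟨hx, hxF⟩] at hu
    rw [hΘF y hyF] at hv
    rw [hΘK z ⟨hzK, hzF⟩]
    obtain ⟨huF, huε⟩ := hu
    refine ⟨hF huF (hv ▸ hyF) hαle hα'le (by ring), ?_⟩
    have : z - (α • u + (1 - α) • v) = α • (x - u) := by
      rw [hz, hv]; rw [smul_sub]; abel
    rw [this, norm_smul, Real.norm_eq_abs, abs_of_pos hα]
    calc α * ‖x - u‖ < 1 * ε := by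
          apply mul_lt_mul' (by linarith) huε (norm_nonneg _) one_pos
      _ = ε := one_mul ε
  · -- neither in F
    have hzF : z ∉ F := fun h => hxF (hFK.2 hx hy h hzseg)
    rw [hΘK x ⟨hx, hxF⟩] at hu
    rw [hΘK y ⟨hy, hyF⟩] at hv
    rw [hΘK z ⟨hzK, hzF⟩]
    obtain ⟨huF, huε⟩ := hu
    obtain ⟨hvF, hvε⟩ := hv
    refine ⟨hF huF hvF hαle hα'le (by ring), ?_⟩
    have : z - (α • u + (1 - α) • v) = α • (x - u) + (1 - α) • (y - v) := by
      rw [hz, smul_sub, smul_sub]; abel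
    rw [this]
    calc ‖α • (x - u) + (1 - α) • (y - v)‖
        ≤ ‖α • (x - u)‖ + ‖(1 - α) • (y - v)‖ := norm_add_le _ _
      _ = α * ‖x - u‖ + (1 - α) * ‖y - v‖ := by
          rw [norm_smul, norm_smul, Real.norm_eq_abs, Real.norm_eq_abs,
            abs_of_pos hα, abs_of_pos hα']
      _ < α * ε + (1 - α) * ε := by
          exact add_lt_add (by exact (mul_lt_mul_iff_right₀ hα).2 huε)
            ((mul_lt_mul_iff_right₀ hα').2 hvε)
      _ = ε := by ring
end

section
/- Let V be a Hausdorff locally convex real topological vector space, let K ⊆ V be a nonempty compact convex set, and let F ⊆ K be a closed convex face of K (i.e. F is convex and whenever a point of F lies in the open segment between two points of K, both of these points lie in F) with F ≠ K. Then F is nowhere dense in K; equivalently, every x ∈ F lies in the closure of K \ F. -/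
/-- Every proper closed face `F` of a nonempty compact convex set `K` in a Hausdorff
locally convex real topological vector space is nowhere dense in `K`: every point of
`F` lies in the closure of `K \ F`. -/
theorem proper_face_nowhere_dense
    (V : Type*) [AddCommGroup V] [Module ℝ V] [TopologicalSpace V]
    [IsTopologicalAddGroup V] [ContinuousSMul ℝ V] [LocallyConvexSpace ℝ V] [T2Space V]
    (K F : Set V)
    (hK_ne : K.Nonempty) (hK_cpt : IsCompact K) (hK_conv : Convex ℝ K)
    (hF_closed : IsClosed F) (hF_conv : Convex ℝ F) (hF_face : IsExtreme ℝ K F)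
    (hF_ne : F ≠ K) :
    ∀ x ∈ F, x ∈ closure (K \ F) := by
  obtain ⟨e, heK, heF⟩ : ∃ e, e ∈ K \ F := by
    by_contra h
    push_neg at h
    exact hF_ne (hF_face.1.antisymm fun y hy => by_contra fun hyF => h y ⟨hy, hyF⟩)
  intro x hx
  have hxK : x ∈ K := hF_face.1 hx
  have key : ∀ t ∈ Set.Ioo (0:ℝ) 1, t • e + (1 - t) • x ∈ K \ F := by
    intro t ht
    refine ⟨hK_conv heK hxK ht.1.le (by linarith [ht.2]) (by ring), fun hmem => heF ?_⟩
    exact (hF_face.2 heK hxK hmem ⟨t, 1 - t, ht.1, by linarith [ht.2], by ring, rfl⟩)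
  have htends : Filter.Tendsto (fun t : ℝ => t • e + (1 - t) • x) (nhdsWithin 0 (Set.Ioo 0 1)) (nhds x) := by
    have hc : Continuous (fun t : ℝ => t • e + (1 - t) • x) := by continuity
    have := hc.tendsto 0
    simp only [zero_smul, sub_zero, one_smul, zero_add] at this
    exact this.mono_left nhdsWithin_le_nhds
  have hne : (nhdsWithin (0:ℝ) (Set.Ioo 0 1)).NeBot := by
    rw [← mem_closure_iff_nhdsWithin_neBot, closure_Ioo one_ne_zero.symm]
    exact ⟨le_refl 0, one_pos.le⟩
  exact mem_closure_of_tendsto htends (Filter.eventually_of_mem self_mem_nhdsWithin key)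
end

section
/- Let X and Y be compact metric spaces and π : X → Y a continuous surjection. Let ν be a Borel probability measure on Y, and suppose there is a Borel set D ⊆ Y with ν(D) = 0 such that for every y ∈ Y \ D the fiber π⁻¹({y}) is a singleton. Then there exists exactly one Borel probability measure μ on X with μ ∘ π⁻¹ = ν. -/
open MeasureTheory

/-- If `π : X → Y` is a continuous surjection between compact metric spaces which is
one-to-one off a `ν`-null Borel set `D` (fibers over `Y \ D` are singletons), then the
probability measure `ν` on `Y` has exactly one preimage under the pushforward map. -/
theorem unique_lift_of_ae_injective_factor
    (X : Type*) [MetricSpace X] [CompactSpace X] [MeasurableSpace X] [BorelSpace X]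
    (Y : Type*) [MetricSpace Y] [CompactSpace Y] [MeasurableSpace Y] [BorelSpace Y]
    (π : X → Y) (hπ_cont : Continuous π) (hπ_surj : Function.Surjective π)
    (ν : Measure Y) [IsProbabilityMeasure ν]
    (D : Set Y) (hD_meas : MeasurableSet D) (hD_null : ν D = 0)
    (h_fibers : ∀ y ∉ D, ∃ x : X, π ⁻¹' {y} = {x}) :
    ∃! μ : Measure X, IsProbabilityMeasure μ ∧ μ.map π = ν := by
  classical
  have hπ_meas : Measurable π := hπ_cont.measurable
  -- X is nonempty
  have hYne : Nonempty Y := by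
    by_contra h
    have : (Set.univ : Set Y) = ∅ := by
      ext y; exact (h ⟨y⟩).elim
    have h1 : ν Set.univ = 1 := measure_univ
    rw [this, measure_empty] at h1
    exact zero_ne_one h1
  have hXne : Nonempty X := ⟨(hπ_surj hYne.some).choose⟩
  -- the set over which π is injective
  set E : Set X := π ⁻¹' Dᶜ with hE
  have hE_meas : MeasurableSet E := hπ_meas hD_meas.compl
  have hInjOn : Set.InjOn π E := by
    intro a ha b hb hab
    obtain ⟨x, hx⟩ := h_fibers (π a) ha
    have ha' : a ∈ π ⁻¹' {π a} := rfl
    have hb' : b ∈ π ⁻¹' {π a} := by simp [hab]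
    rw [hx] at ha' hb'
    simp only [Set.mem_singleton_iff] at ha' hb'
    rw [ha', hb']
  have hemb : MeasurableEmbedding (E.restrict π) :=
    ContinuousOn.measurableEmbedding hE_meas hπ_cont.continuousOn hInjOn
  obtain ⟨s, hs_meas, hs_eq⟩ :=
    hemb.exists_measurable_extend (g := (Subtype.val : E → X))
      measurable_subtype_coe (fun _ => hXne)
  -- key property of the section s
  have hs_sec : ∀ y ∉ D, π ⁻¹' {y} = {s y} := by
    intro y hy
    obtain ⟨x, hx⟩ := h_fibers y hy
    have hπx : π x = y := by
      have : x ∈ π ⁻¹' {y} := by rw [hx]; rfl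
      exact this
    have hxE : x ∈ E := by
      rw [hE]
      simp only [Set.mem_preimage, Set.mem_compl_iff]
      rwa [hπx]
    have : s y = x := by
      have := congrFun hs_eq ⟨x, hxE⟩
      simpa [Set.restrict, hπx] using this
    rw [hx, this]
  -- any lift equals ν.map s
  have key : ∀ μ : Measure X, IsProbabilityMeasure μ → μ.map π = ν → μ = ν.map s := by
    intro μ hμp hμmap
    have hnull : μ (π ⁻¹' D) = 0 := by
      rw [← hμmap] at hD_null
      rwa [Measure.map_apply hπ_meas hD_meas] at hD_null
    have hae : (fun x => s (π x)) =ᵐ[μ] id := by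
      refine measure_mono_null (fun x hx => ?_) hnull
      simp only [Set.mem_setOf_eq] at hx
      by_contra hxD
      have hy : π x ∉ D := hxD
      have := hs_sec (π x) hy
      have hxmem : x ∈ π ⁻¹' {π x} := rfl
      rw [this] at hxmem
      exact hx hxmem.symm
    calc μ = μ.map id := (Measure.map_id).symm
      _ = μ.map (s ∘ π) := (Measure.map_congr hae).symm
      _ = (μ.map π).map s := (Measure.map_map hs_meas hπ_meas).symm
      _ = ν.map s := by rw [hμmap]
  -- existence
  have hprob : IsProbabilityMeasure (ν.map s) := Measure.isProbabilityMeasure_map hs_meas.aemeasurable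
  have hmap : (ν.map s).map π = ν := by
    have hae : (fun y => π (s y)) =ᵐ[ν] id := by
      refine measure_mono_null (fun y hy => ?_) hD_null
      simp only [Set.mem_setOf_eq] at hy
      by_contra hyD
      have := hs_sec y hyD
      have : s y ∈ π ⁻¹' {y} := by rw [this]; rfl
      exact hy this
    calc (ν.map s).map π = ν.map (π ∘ s) := Measure.map_map hπ_meas hs_meas
      _ = ν.map id := Measure.map_congr hae
      _ = ν := Measure.map_id
  exact ⟨ν.map s, ⟨hprob, hmap⟩, fun μ ⟨h1, h2⟩ => key μ h1 h2⟩
end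

section
/- Let X be a nonempty compact metrizable totally disconnected space and let T : X → X be a continuous map (not necessarily invertible) with no periodic points, i.e. the n-th iterate T^[n] satisfies T^[n](x) ≠ x for every x ∈ X and every integer n ≥ 1. Then for every integer n ≥ 1 there exist a clopen set F ⊆ X and an integer N ≥ 1 such that the preimages F, T⁻¹(F), …, T⁻⁽ⁿ⁻¹⁾(F) are pairwise disjoint and F ∪ T⁻¹(F) ∪ … ∪ T⁻⁽ᴺ⁻¹⁾(F) = X. -/
open Set Function

section helpers

variable {X : Type*} [TopologicalSpace X]

private lemma isClopen_preimage_lc {Y : Type*} {f : X → Y}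
    (hf : IsLocallyConstant f) (s : Set Y) : IsClopen (f ⁻¹' s) := by
  refine ⟨?_, hf s⟩
  rw [← isOpen_compl_iff, ← Set.preimage_compl]
  exact hf _

private lemma isLocallyConstant_find {P : ℕ → X → Prop}
    [inst : ∀ z, DecidablePred fun k => P k z]
    (hex : ∀ z, ∃ k, P k z) (hcl : ∀ k, IsClopen {z | P k z}) :
    IsLocallyConstant fun z => Nat.find (hex z) := by
  rw [IsLocallyConstant.iff_isOpen_fiber]
  intro k
  have heq : (fun z => Nat.find (hex z)) ⁻¹' {k} =
      {z | P k z} ∩ ⋂ j ∈ Finset.range k, {z | P j z}ᶜ := by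
    ext z
    simp only [Set.mem_preimage, Set.mem_singleton_iff, Nat.find_eq_iff, Set.mem_inter_iff,
      Set.mem_iInter, Finset.mem_range, Set.mem_compl_iff, Set.mem_setOf_eq]
  rw [heq]
  exact ((hcl k).isOpen).inter (isOpen_biInter_finset fun j _ => (hcl j).compl.isOpen)

private lemma run_bound {g : ℕ → ℕ} {m : ℕ} (h : ∀ i, i ≤ m → g i < g (i + 1)) :
    g 0 + (m + 1) ≤ g (m + 1) := by
  have key : ∀ i, i ≤ m + 1 → g 0 + i ≤ g i := by
    intro i
    induction i with
    | zero => omega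
    | succ i ih =>
      intro hi
      have h1 := ih (by omega)
      have h2 := h i (by omega)
      omega
  exact key _ le_rfl

private lemma run_bound' {g : ℕ → ℕ} {m : ℕ} (h : ∀ i, i ≤ m → g (i + 1) < g i) :
    g (m + 1) + (m + 1) ≤ g 0 := by
  have key : ∀ i, i ≤ m + 1 → g i + i ≤ g 0 := by
    intro i
    induction i with
    | zero => omega
    | succ i ih =>
      intro hi
      have h1 := ih (by omega)
      have h2 := h i (by omega)
      omega
  exact key _ le_rfl

/-- The doubling step: from a clopen marker with separation `n` and covering bound `N`,
produce one with separation `2*n`. -/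
private lemma marker_step {X : Type*} [TopologicalSpace X] [CompactSpace X] [T2Space X]
    [TotallyDisconnectedSpace X]
    (T : X → X) (hT : Continuous T)
    (h_aper : ∀ (x : X) (n : ℕ), 1 ≤ n → T^[n] x ≠ x)
    (n : ℕ) (F : Set X) (N : ℕ) (hF : IsClopen F) (hN : 1 ≤ N)
    (hsep : ∀ k, 1 ≤ k → k < n → Disjoint F (T^[k] ⁻¹' F))
    (hcov : ∀ x, ∃ i < N, T^[i] x ∈ F) :
    ∃ (F' : Set X) (N' : ℕ), IsClopen F' ∧ 1 ≤ N' ∧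
      (∀ k, 1 ≤ k → k < 2 * n → Disjoint F' (T^[k] ⁻¹' F')) ∧
      ∀ x, ∃ i < N', T^[i] x ∈ F' := by
  classical
  -- return time to F
  have hrex : ∀ z : X, ∃ i, T^[i + 1] z ∈ F := by
    intro z
    obtain ⟨i, _, hi⟩ := hcov (T z)
    exact ⟨i, by rwa [Function.iterate_succ_apply]⟩
  set r : X → ℕ := fun z => Nat.find (hrex z) + 1 with hr_def
  have hrF : ∀ z, T^[r z] z ∈ F := fun z => Nat.find_spec (hrex z)
  have hr1 : ∀ z, 1 ≤ r z := fun z => Nat.succ_le_succ (Nat.zero_le _)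
  have hrmin : ∀ z j, 1 ≤ j → j < r z → T^[j] z ∉ F := by
    intro z j hj1 hjr hmem
    have hjr' : j < Nat.find (hrex z) + 1 := hjr
    have hlt : j - 1 < Nat.find (hrex z) := by omega
    exact Nat.find_min (hrex z) hlt (by rwa [Nat.sub_add_cancel hj1])
  have hrN : ∀ z, r z ≤ N := by
    intro z
    obtain ⟨i, hiN, hi⟩ := hcov (T z)
    have : Nat.find (hrex z) ≤ i :=
      Nat.find_min' (hrex z) (by rwa [Function.iterate_succ_apply])
    show Nat.find (hrex z) + 1 ≤ N
    omega
  have hrn : ∀ z, z ∈ F → n ≤ r z := by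
    intro z hz
    by_contra h
    push_neg at h
    exact Set.disjoint_left.mp (hsep (r z) (hr1 z) h) hz (hrF z)
  -- r is locally constant
  have hPcl : ∀ k : ℕ, IsClopen {z : X | T^[k + 1] z ∈ F} :=
    fun k => hF.preimage (hT.iterate (k + 1))
  have hrlc : IsLocallyConstant r := by
    have h1 : IsLocallyConstant fun z => Nat.find (hrex z) :=
      isLocallyConstant_find (P := fun k z => T^[k + 1] z ∈ F) hrex hPcl
    exact h1.comp (· + 1)
  -- the return map
  set R : X → X := fun z => T^[r z] z with hR_def
  have hRapp : ∀ w, R w = T^[r w] w := fun w => rfl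
  have hRcont : Continuous R := by
    rw [continuous_iff_continuousAt]
    intro z
    have hmem : {w | r w = r z} ∈ nhds z := (hrlc.isOpen_fiber (r z)).mem_nhds rfl
    have hev : R =ᶠ[nhds z] fun w => T^[r z] w := by
      filter_upwards [hmem] with w hw
      rw [hRapp w, hw]
    exact ((hT.iterate (r z)).continuousAt).congr hev.symm
  have hRF : ∀ z, R z ∈ F := fun z => hrF z
  have hRne : ∀ z, R z ≠ z := fun z => h_aper z (r z) (hr1 z)
  -- a clopen "coloring" with ℓ (R z) ≠ ℓ z
  have hEex : ∀ y : X, ∃ Cy : Set X, IsClopen Cy ∧ y ∈ Cy ∧ R y ∉ Cy := by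
    intro y
    obtain ⟨U, hU, hyU, hRU⟩ := exists_isClopen_of_totally_separated (Ne.symm (hRne y))
    exact ⟨U, hU, hyU, hRU⟩
  choose C hCcl hCmem hCR using hEex
  set E : X → Set X := fun y => C y ∩ R ⁻¹' (C y)ᶜ with hE_def
  have hEclopen : ∀ y, IsClopen (E y) :=
    fun y => (hCcl y).inter (((hCcl y).compl).preimage hRcont)
  have hEmem : ∀ y, y ∈ E y := fun y => ⟨hCmem y, hCR y⟩
  have hER : ∀ y z, z ∈ E y → R z ∉ E y := fun y z hz hc => hz.2 hc.1
  obtain ⟨t, ht⟩ := isCompact_univ.elim_finite_subcover E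
    (fun y => (hEclopen y).isOpen) (fun z _ => Set.mem_iUnion.mpr ⟨z, hEmem z⟩)
  set lst := t.toList with hlst
  set d : ℕ → Set X := fun j => if h : j < lst.length then E (lst.get ⟨j, h⟩) else ∅ with hd_def
  have hd_clopen : ∀ j, IsClopen (d j) := by
    intro j
    simp only [hd_def]
    split
    · exact hEclopen _
    · exact isClopen_empty
  have hdR : ∀ j z, z ∈ d j → R z ∉ d j := by
    intro j z
    simp only [hd_def]
    split
    · exact hER _ z
    · exact fun h => absurd h (Set.notMem_empty z)
  have hdex : ∀ z : X, ∃ j, z ∈ d j := by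
    intro z
    have hz := ht (Set.mem_univ z)
    rw [Set.mem_iUnion₂] at hz
    obtain ⟨y, hyt, hzy⟩ := hz
    have hmem : y ∈ lst := Finset.mem_toList.mpr hyt
    obtain ⟨i, hi⟩ := List.mem_iff_get.mp hmem
    refine ⟨i, ?_⟩
    simp only [hd_def]
    rw [dif_pos i.isLt]
    simp only [Fin.eta]
    rw [hi]
    exact hzy
  set ℓ : X → ℕ := fun z => Nat.find (hdex z) with hℓ_def
  have hℓmem : ∀ z, z ∈ d (ℓ z) := fun z => Nat.find_spec (hdex z)
  have hℓlt : ∀ z, ℓ z < lst.length := by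
    intro z
    by_contra h
    have := hℓmem z
    simp only [hd_def, dif_neg h] at this
    exact this
  have hℓR : ∀ z, ℓ (R z) ≠ ℓ z := by
    intro z heq
    exact hdR (ℓ z) z (hℓmem z) (heq ▸ hℓmem (R z))
  have hℓlc : IsLocallyConstant ℓ :=
    isLocallyConstant_find (P := fun k z => z ∈ d k) hdex hd_clopen
  -- the new marker set
  set F' : Set X := (F ∩ {z | ℓ z < ℓ (R z)}) ∩ {z | ℓ (R (R z)) < ℓ (R z)} with hF'_def
  have hF'clopen : IsClopen F' := by
    have hlc1 : IsLocallyConstant fun z => (ℓ z, ℓ (R z)) :=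
      hℓlc.prodMk (hℓlc.comp_continuous hRcont)
    have hlc2 : IsLocallyConstant fun z => (ℓ (R (R z)), ℓ (R z)) :=
      (hℓlc.comp_continuous (hRcont.comp hRcont)).prodMk (hℓlc.comp_continuous hRcont)
    have h1 : IsClopen {z | ℓ z < ℓ (R z)} :=
      isClopen_preimage_lc hlc1 {p : ℕ × ℕ | p.1 < p.2}
    have h2 : IsClopen {z | ℓ (R (R z)) < ℓ (R z)} :=
      isClopen_preimage_lc hlc2 {p : ℕ × ℕ | p.1 < p.2}
    exact (hF.inter h1).inter h2
  -- visits to F are iterates of R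
  have visit : ∀ d : ℕ, ∀ z, z ∈ F → T^[d] z ∈ F → 1 ≤ d →
      ∃ s, 1 ≤ s ∧ R^[s] z = T^[d] z ∧ n * s ≤ d := by
    intro d
    induction d using Nat.strong_induction_on with
    | _ d ih =>
      intro z hzF hdF hd1
      have hrd : r z ≤ d := by
        by_contra h
        push_neg at h
        exact hrmin z d hd1 h hdF
      have hadd : d - r z + r z = d := by omega
      have hsplit : T^[d - r z] (R z) = T^[d] z := by
        rw [hRapp z, ← Function.iterate_add_apply, hadd]
      by_cases h0 : d - r z = 0
      · refine ⟨1, le_rfl, ?_, ?_⟩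
        · rw [Function.iterate_one, ← hsplit, h0, Function.iterate_zero_apply]
        · have := hrn z hzF
          omega
      · have hr1z := hr1 z
        obtain ⟨s, hs1, hsR, hsn⟩ := ih (d - r z) (by omega) (R z) (hRF z)
          (by rw [hsplit]; exact hdF) (by omega)
        refine ⟨s + 1, by omega, ?_, ?_⟩
        · rw [Function.iterate_succ_apply, hsR, hsplit]
        · have := hrn z hzF
          rw [Nat.mul_succ]
          omega
  -- separation
  have hsep' : ∀ k, 1 ≤ k → k < 2 * n → Disjoint F' (T^[k] ⁻¹' F') := by
    intro k hk1 hk2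
    rw [Set.disjoint_left]
    intro z hzF' hzk
    have hzk' : T^[k] z ∈ F' := hzk
    have hzF : z ∈ F := hzF'.1.1
    have hkF : T^[k] z ∈ F := hzk'.1.1
    obtain ⟨s, hs1, hsR, hsn⟩ := visit k z hzF hkF hk1
    have hs : s = 1 := by
      rcases Nat.lt_or_ge s 2 with h | h
      · omega
      · exfalso
        have : n * 2 ≤ n * s := Nat.mul_le_mul_left n h
        omega
    have hRz : R z = T^[k] z := by
      rw [← hsR, hs, Function.iterate_one]
    have h1 : ℓ (R (R z)) < ℓ (R z) := hzF'.2
    have h2 : ℓ (R z) < ℓ (R (R z)) := by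
      rw [hRz]
      exact hzk'.1.2
    omega
  refine ⟨F', (2 * lst.length + 1) * N, hF'clopen, Nat.mul_pos (by omega) hN, hsep', ?_⟩
  -- covering
  intro x
  obtain ⟨i0, hi0N, hi0F⟩ := hcov x
  set y0 := T^[i0] x with hy0
  have htime : ∀ j, ∃ m, m < (j + 1) * N ∧ T^[m] x = R^[j] y0 := by
    intro j
    induction j with
    | zero => exact ⟨i0, by omega, rfl⟩
    | succ j ih =>
      obtain ⟨m, hm, hmx⟩ := ih
      refine ⟨r (R^[j] y0) + m, ?_, ?_⟩
      · have h1 := hrN (R^[j] y0)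
        have h2 : (j + 1 + 1) * N = (j + 1) * N + N := by ring
        omega
      · rw [Function.iterate_add_apply, hmx,
          show R^[j + 1] y0 = R (R^[j] y0) from Function.iterate_succ_apply' R j y0]
  have hmemF : ∀ j, R^[j] y0 ∈ F := by
    intro j
    cases j with
    | zero => exact hi0F
    | succ j =>
      rw [Function.iterate_succ_apply']
      exact hRF _
  have key : ∃ j, j ≤ 2 * lst.length ∧ R^[j] y0 ∈ F' := by
    by_contra hcon
    push_neg at hcon
    set g : ℕ → ℕ := fun j => ℓ (R^[j] y0) with hg
    have hgsucc : ∀ j, g (j + 1) = ℓ (R (R^[j] y0)) := by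
      intro j
      simp only [hg]
      rw [Function.iterate_succ_apply']
    have hgsucc2 : ∀ j, g (j + 2) = ℓ (R (R (R^[j] y0))) := by
      intro j
      simp only [hg]
      rw [show j + 2 = j + 1 + 1 from rfl, Function.iterate_succ_apply',
        Function.iterate_succ_apply']
    have hgne : ∀ j, g (j + 1) ≠ g j := by
      intro j
      rw [hgsucc j]
      exact hℓR (R^[j] y0)
    have hglt : ∀ j, g j < lst.length := fun j => hℓlt _
    have hmemF' : ∀ j, g j < g (j + 1) → g (j + 2) < g (j + 1) → R^[j] y0 ∈ F' := by
      intro j h1 h2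
      rw [hgsucc j] at h1 h2
      rw [hgsucc2 j] at h2
      exact ⟨⟨hmemF j, h1⟩, h2⟩
    have hstep : ∀ j, j ≤ 2 * lst.length → g j < g (j + 1) → g (j + 1) < g (j + 2) := by
      intro j hj hasc
      rcases Nat.lt_or_ge (g (j + 1)) (g (j + 2)) with h | h
      · exact h
      · have hne : g (j + 2) ≠ g (j + 1) := by
          have := hgne (j + 1)
          rw [show j + 1 + 1 = j + 2 from rfl] at this
          exact this
        have hlt : g (j + 2) < g (j + 1) := by omega
        exact absurd (hmemF' j hasc hlt) (hcon j hj)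
    rcases Classical.em (∃ j, j ≤ lst.length ∧ g j < g (j + 1)) with ⟨j, hj, hasc⟩ | hdesc
    · have hmono : ∀ i, i ≤ lst.length → g (j + i) < g (j + i + 1) := by
        intro i
        induction i with
        | zero => intro _; simpa using hasc
        | succ i ih =>
          intro hi
          have h1 := ih (by omega)
          have h2 := hstep (j + i) (by omega) h1
          rw [show j + (i + 1) = j + i + 1 from by omega,
            show j + i + 1 + 1 = j + i + 2 from by omega]
          exact h2
      have hrb := run_bound (g := fun i => g (j + i)) (m := lst.length)
        (fun i hi => by
          have := hmono i hi
          simpa [show j + (i + 1) = j + i + 1 from by omega] using this)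
      have hrb' : g (j + 0) + (lst.length + 1) ≤ g (j + (lst.length + 1)) := hrb
      have hbd := hglt (j + (lst.length + 1))
      omega
    · push_neg at hdesc
      have hmono : ∀ i, i ≤ lst.length → g (i + 1) < g i := by
        intro i hi
        have h1 := hdesc i hi
        have h2 := hgne i
        omega
      have hrb := run_bound' (m := lst.length) hmono
      have hbd := hglt 0
      omega
  obtain ⟨j, hj, hjF'⟩ := key
  obtain ⟨m, hm, hmx⟩ := htime j
  refine ⟨m, ?_, ?_⟩
  · have hle : (j + 1) * N ≤ (2 * lst.length + 1) * N := Nat.mul_le_mul_right N (by omega)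
    omega
  · rw [hmx]
    exact hjF'

end helpers

/-- Krieger's Marker Lemma, noninvertible case: if `T` is a continuous aperiodic
map of a nonempty compact metrizable totally disconnected space, then for every
`n ≥ 1` there are a clopen set `F` and an `N ≥ 1` such that the preimages
`F, T⁻¹F, …, T⁻⁽ⁿ⁻¹⁾F` are pairwise disjoint and `F ∪ T⁻¹F ∪ … ∪ T⁻⁽ᴺ⁻¹⁾F = X`. -/
theorem krieger_marker_lemma_noninvertible
    (X : Type*) [TopologicalSpace X] [CompactSpace X]
    [TopologicalSpace.MetrizableSpace X] [TotallyDisconnectedSpace X] [Nonempty X]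
    (T : X → X) (hT : Continuous T)
    (h_aper : ∀ (x : X) (n : ℕ), 1 ≤ n → T^[n] x ≠ x)
    (n : ℕ) (hn : 1 ≤ n) :
    ∃ (F : Set X) (N : ℕ), IsClopen F ∧ 1 ≤ N ∧
      (∀ i j, i < n → j < n → i ≠ j →
        Disjoint (T^[i] ⁻¹' F) (T^[j] ⁻¹' F)) ∧
      (⋃ i < N, T^[i] ⁻¹' F) = Set.univ := by
  have key : ∀ k : ℕ, ∃ (F : Set X) (N : ℕ), IsClopen F ∧ 1 ≤ N ∧
      (∀ j, 1 ≤ j → j < 2 ^ k → Disjoint F (T^[j] ⁻¹' F)) ∧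
      ∀ x, ∃ i < N, T^[i] x ∈ F := by
    intro k
    induction k with
    | zero =>
      refine ⟨Set.univ, 1, isClopen_univ, le_rfl, ?_, fun x => ⟨0, one_pos, Set.mem_univ _⟩⟩
      intro j hj1 hj2
      simp only [pow_zero] at hj2
      exact absurd hj2 (by omega)
    | succ k ih =>
      obtain ⟨F, N, hF, hN, hsep, hcov⟩ := ih
      obtain ⟨F', N', h1, h2, h3, h4⟩ :=
        marker_step T hT h_aper (2 ^ k) F N hF hN hsep hcov
      refine ⟨F', N', h1, h2, ?_, h4⟩
      intro j hj1 hj2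
      rw [pow_succ] at hj2
      exact h3 j hj1 (by omega)
  obtain ⟨F, N, hF, hN, hsep, hcov⟩ := key n
  refine ⟨F, N, hF, hN, ?_, ?_⟩
  · have main : ∀ i j, i < j → j < n → Disjoint (T^[i] ⁻¹' F) (T^[j] ⁻¹' F) := by
      intro i j hij hjn
      rw [Set.disjoint_left]
      intro x hxi hxj
      have h1 : T^[i] x ∈ F := hxi
      have h2 : T^[j - i] (T^[i] x) ∈ F := by
        rw [← Function.iterate_add_apply, show j - i + i = j from by omega]
        exact hxj
      have hlt : j - i < 2 ^ n := by
        have := (Nat.lt_two_pow_self : n < 2 ^ n)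
        omega
      exact Set.disjoint_left.mp (hsep (j - i) (by omega) hlt) h1 h2
    intro i j hi hj hij
    rcases Nat.lt_or_ge i j with h | h
    · exact main i j h hj
    · exact (main j i (by omega) hi).symm
  · apply Set.eq_univ_of_forall
    intro x
    obtain ⟨i, hiN, hiF⟩ := hcov x
    exact Set.mem_iUnion₂.mpr ⟨i, hiN, hiF⟩
end
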